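/- Every minimal prime graph has diameter exactly 2. -/

import Mathlib

open SimpleGraph

def bridgeAdj (m n : ℕ) : (Fin m ⊕ Fin n) → (Fin m ⊕ Fin n) → Prop
  | Sum.inl i, Sum.inl j => i ≠ j
  | Sum.inr i, Sum.inr j => i ≠ j
  | Sum.inl i, Sum.inr j => i.val = 0 ∧ j.val = 0
  | Sum.inr i, Sum.inl j => i.val = 0 ∧ j.val = 0

/-- The complete bridge graph `B_{m,n}`: two disjoint complete graphs on `m` and `n`
vertices respectively, joined by exactly one edge (the bridge). -/
def completeBridgeGraph (m n : ℕ) : SimpleGraph (Fin m ⊕ Fin n) where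
  Adj := bridgeAdj m n
  symm := by
    constructor <;> rintro (a | a) (b | b) h <;> simp_all [bridgeAdj] <;> tauto
  loopless := by
    constructor <;> rintro (a | a) h <;> simp_all [bridgeAdj]

/-- A minimally connected prime graph (MCPG). -/
def IsMCPG {V : Type} [Fintype V] (Γ : SimpleGraph V) : Prop :=
  2 ≤ Fintype.card V ∧ Γ.Connected ∧ Γᶜ.CliqueFree 3 ∧ Γᶜ.Colorable 3 ∧
    ∀ e ∈ Γ.edgeSet,
      ¬((Γ.deleteEdges {e}).Connected ∧ (Γ.deleteEdges {e})ᶜ.CliqueFree 3 ∧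
        (Γ.deleteEdges {e})ᶜ.Colorable 3)

/-- A minimal prime graph (MPG). -/
def IsMPG {V : Type} [Fintype V] (Γ : SimpleGraph V) : Prop :=
  2 ≤ Fintype.card V ∧ Γ.Connected ∧ Γᶜ.CliqueFree 3 ∧ Γᶜ.Colorable 3 ∧
    ∀ e ∈ Γ.edgeSet,
      ¬((Γ.deleteEdges {e})ᶜ.CliqueFree 3 ∧ (Γ.deleteEdges {e})ᶜ.Colorable 3)

/-- A possibly disconnected minimal prime graph (PDMPG). -/
def IsPDMPG {V : Type} [Fintype V] (Γ : SimpleGraph V) : Prop :=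
  Γᶜ.CliqueFree 3 ∧ Γᶜ.Colorable 3 ∧
    ∀ e ∈ Γ.edgeSet,
      ¬((Γ.deleteEdges {e})ᶜ.CliqueFree 3 ∧ (Γ.deleteEdges {e})ᶜ.Colorable 3)


section Aux

variable {V : Type} {Γ : SimpleGraph V}

/-- Independence in `Γᶜ` of the set `{v} ∪ N_{Γᶜ}(u)` when `Γᶜ` is triangle-free. -/
lemma mpg_side_indep (hcf : Γᶜ.CliqueFree 3) {u v : V} (huv : Γᶜ.Adj u v) :
    ∀ x y, (x = v ∨ Γᶜ.Adj u x) → (y = v ∨ Γᶜ.Adj u y) → ¬Γᶜ.Adj x y := by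
  classical
  rintro x y (rfl | hx) (rfl | hy) hxy
  · exact hxy.ne rfl
  · exact hcf {u, x, y} (is3Clique_triple_iff.mpr ⟨huv, hy, hxy⟩)
  · exact hcf {u, y, x} (is3Clique_triple_iff.mpr ⟨huv, hx, hxy.symm⟩)
  · exact hcf {u, x, y} (is3Clique_triple_iff.mpr ⟨hx, hy, hxy⟩)

lemma mpg_del_adj {e : Sym2 V} {x y : V} :
    (Γ.deleteEdges {e})ᶜ.Adj x y ↔ Γᶜ.Adj x y ∨ (x ≠ y ∧ s(x, y) = e) := by
  simp only [compl_adj, deleteEdges_adj, Set.mem_singleton_iff, not_and, not_not]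
  constructor
  · rintro ⟨hne, h⟩
    by_cases hA : Γ.Adj x y
    · exact Or.inr ⟨hne, h hA⟩
    · exact Or.inl ⟨hne, hA⟩
  · rintro (⟨hne, h⟩ | ⟨hne, h⟩)
    · exact ⟨hne, fun hA => absurd hA h⟩
    · exact ⟨hne, fun _ => h⟩

/-- Key lemma: in an MPG, any two distinct nonadjacent vertices have a common neighbor. -/
lemma mpg_common_nbr [Fintype V] (h : IsMPG Γ) {u v : V} (hne : u ≠ v)
    (hnadj : ¬Γ.Adj u v) : ∃ w, Γ.Adj u w ∧ Γ.Adj w v := by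
  classical
  obtain ⟨hcard, hconn, hcf, hcol, hmin⟩ := h
  by_contra hno
  push_neg at hno
  have huv : Γᶜ.Adj u v := ⟨hne, hnadj⟩
  set A : Set V := {x | x = v ∨ Γᶜ.Adj u x} with hA
  set B : Set V := {x | x = u ∨ Γᶜ.Adj v x} with hB
  have hvA : v ∈ A := Or.inl rfl
  have huB : u ∈ B := Or.inl rfl
  have hdisj : ∀ x, x ∈ A → x ∈ B → False := by
    rintro x (rfl | hx) (rfl | hx')
    · exact hne rfl
    · exact hx'.ne rfl
    · exact hx.ne rfl
    · exact hcf {u, v, x} (is3Clique_triple_iff.mpr ⟨huv, hx, hx'⟩)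
  have hcover : ∀ x, x ∈ A ∨ x ∈ B := by
    intro x
    by_cases hxv : x = v
    · exact Or.inl (Or.inl hxv)
    by_cases hxu : x = u
    · exact Or.inr (Or.inl hxu)
    by_cases hux : Γ.Adj u x
    · exact Or.inr (Or.inr ⟨fun h' => hxv h'.symm, fun h' => hno x hux h'.symm⟩)
    · exact Or.inl (Or.inr ⟨fun h' => hxu h'.symm, hux⟩)
  have hAind : ∀ x y, x ∈ A → y ∈ A → ¬Γᶜ.Adj x y := mpg_side_indep hcf huv
  have hBind : ∀ x y, x ∈ B → y ∈ B → ¬Γᶜ.Adj x y := mpg_side_indep hcf huv.symm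
  -- every Γᶜ-edge crosses between A and B
  have hcross : ∀ x y, Γᶜ.Adj x y → (x ∈ A ∧ y ∈ B) ∨ (x ∈ B ∧ y ∈ A) := by
    intro x y hxy
    rcases hcover x with hx | hx
    · rcases hcover y with hy | hy
      · exact absurd hxy (hAind x y hx hy)
      · exact Or.inl ⟨hx, hy⟩
    · rcases hcover y with hy | hy
      · exact Or.inr ⟨hx, hy⟩
      · exact absurd hxy (hBind x y hx hy)
  -- there exists a Γ-edge crossing between A and B
  obtain ⟨a, b, haA, hbB, hab⟩ : ∃ a b, a ∈ A ∧ b ∈ B ∧ Γ.Adj a b := by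
    by_contra hnoc
    push_neg at hnoc
    have hclosed : ∀ x y, x ∈ B → Γ.Adj x y → y ∈ B := by
      intro x y hx hxy
      rcases hcover y with hy | hy
      · exact absurd hxy.symm (hnoc y x hy hx)
      · exact hy
    have hwalk : ∀ (x y : V), x ∈ B → Γ.Walk x y → y ∈ B := by
      intro x y hx p
      induction p with
      | nil => exact hx
      | cons hadj _ ih => exact ih (hclosed _ _ hx hadj)
    exact hdisj v hvA (hwalk u v huB (hconn.preconnected u v).some)
  have haB : a ∉ B := fun h' => hdisj a haA h'
  have hbA : b ∉ A := fun h' => hdisj b h' hbB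
  -- deleting edge s(a,b) contradicts minimality
  refine hmin s(a, b) (Γ.mem_edgeSet.mpr hab) ⟨?_, ?_⟩
  · -- triangle-free
    intro s hs
    rw [is3Clique_iff] at hs
    obtain ⟨x, y, z, hxy, hxz, hyz, rfl⟩ := hs
    have cross : ∀ p q, (Γ.deleteEdges {s(a, b)})ᶜ.Adj p q →
        (p ∈ A ∧ q ∈ B) ∨ (p ∈ B ∧ q ∈ A) := by
      intro p q hpq
      rcases mpg_del_adj.mp hpq with h' | ⟨_, h'⟩
      · exact hcross p q h'
      · rcases Sym2.eq_iff.mp h' with ⟨rfl, rfl⟩ | ⟨rfl, rfl⟩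
        · exact Or.inl ⟨haA, hbB⟩
        · exact Or.inr ⟨hbB, haA⟩
    rcases cross x y hxy with ⟨hx, hy⟩ | ⟨hx, hy⟩
    · rcases cross x z hxz with ⟨_, hz⟩ | ⟨hx', _⟩
      · rcases cross y z hyz with ⟨hy', _⟩ | ⟨_, hz'⟩
        · exact hdisj y hy' hy
        · exact hdisj z hz' hz
      · exact hdisj x hx hx'
    · rcases cross x z hxz with ⟨hx', _⟩ | ⟨_, hz⟩
      · exact hdisj x hx' hx
      · rcases cross y z hyz with ⟨_, hz'⟩ | ⟨hy', _⟩
        · exact hdisj z hz hz'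
        · exact hdisj y hy hy'
  · -- 3-colorable
    refine ⟨Coloring.mk (fun x => if x ∈ A then (0 : Fin 3) else 1) ?_⟩
    intro p q hpq
    have cross : (p ∈ A ∧ q ∈ B) ∨ (p ∈ B ∧ q ∈ A) := by
      rcases mpg_del_adj.mp hpq with h' | ⟨_, h'⟩
      · exact hcross p q h'
      · rcases Sym2.eq_iff.mp h' with ⟨rfl, rfl⟩ | ⟨rfl, rfl⟩
        · exact Or.inl ⟨haA, hbB⟩
        · exact Or.inr ⟨hbB, haA⟩
    rcases cross with ⟨hp, hq⟩ | ⟨hp, hq⟩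
    · simp only [if_pos hp, if_neg (fun h' => hdisj q h' hq)]
      decide
    · simp only [if_neg (fun h' => hdisj p h' hp), if_pos hq]
      decide

/-- In an MPG there is a pair of distinct nonadjacent vertices. -/
lemma mpg_not_complete [Fintype V] (h : IsMPG Γ) :
    ∃ u v, u ≠ v ∧ ¬Γ.Adj u v := by
  classical
  obtain ⟨hcard, hconn, hcf, hcol, hmin⟩ := h
  by_contra hno
  push_neg at hno
  have : Nontrivial V := Fintype.one_lt_card_iff_nontrivial.mp hcard
  obtain ⟨x, y, hxy⟩ := exists_pair_ne V
  have hadj : Γ.Adj x y := hno x y hxy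
  have hdel : ∀ p q, (Γ.deleteEdges {s(x, y)})ᶜ.Adj p q → p ≠ q ∧ s(p, q) = s(x, y) := by
    intro p q hpq
    rcases mpg_del_adj.mp hpq with h' | h'
    · exact absurd (hno p q h'.ne) h'.2
    · exact h'
  refine hmin s(x, y) (Γ.mem_edgeSet.mpr hadj) ⟨?_, ?_⟩
  · intro s hs
    rw [is3Clique_iff] at hs
    obtain ⟨p, q, r, hpq, hpr, hqr, rfl⟩ := hs
    obtain ⟨hne1, he1⟩ := hdel p q hpq
    obtain ⟨hne2, he2⟩ := hdel p r hpr
    obtain ⟨hne3, he3⟩ := hdel q r hqr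
    rcases Sym2.eq_iff.mp (he1.trans he2.symm) with ⟨-, h'⟩ | ⟨h1, -⟩
    · exact hne3 h'
    · exact hne2 h1
  · refine ⟨Coloring.mk (fun p => if p = x then (0 : Fin 3) else 1) ?_⟩
    intro p q hpq
    obtain ⟨hne, he⟩ := hdel p q hpq
    rcases Sym2.eq_iff.mp he with ⟨hp, hq⟩ | ⟨hp, hq⟩
    · rw [if_pos hp, if_neg (by rw [hq]; exact Ne.symm hxy)]; decide
    · rw [if_neg (by rw [hp]; exact Ne.symm hxy), if_pos hq]; decide

end Aux

/-- Every minimal prime graph has diameter exactly 2. -/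
theorem stmt8 {V : Type} [Fintype V] (Γ : SimpleGraph V) (h : IsMPG Γ) :
    Γ.diam = 2 := by
  classical
  obtain ⟨hcard, hconn, hcf, hcol, hmin⟩ := id h
  have hpos : 0 < Fintype.card V := Nat.lt_of_lt_of_le (by norm_num) hcard
  have : Nonempty V := Fintype.card_pos_iff.mp hpos
  have hle : ∀ u v, Γ.edist u v ≤ 2 := by
    intro u v
    by_cases huv : u = v
    · subst huv; simp [edist_self]
    by_cases hadj : Γ.Adj u v
    · calc Γ.edist u v = 1 := edist_eq_one_iff_adj.mpr hadj
        _ ≤ 2 := by norm_num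
    obtain ⟨w, h1, h2⟩ := mpg_common_nbr h huv hadj
    have := Γ.edist_le (Walk.cons h1 (Walk.cons h2 Walk.nil))
    simpa using this
  obtain ⟨u, v, hne, hnadj⟩ := mpg_not_complete h
  have h2 : Γ.edist u v = 2 := by
    have hle' := hle u v
    have h0 : Γ.edist u v ≠ 0 := fun h' => hne (edist_eq_zero_iff.mp h')
    have h1 : Γ.edist u v ≠ 1 := fun h' => hnadj (edist_eq_one_iff_adj.mp h')
    have htop : Γ.edist u v ≠ ⊤ := fun h' => by rw [h'] at hle'; exact absurd hle' (by simp)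
    set d := Γ.edist u v with hd
    clear_value d
    lift d to ℕ using htop
    norm_cast at hle' h0 h1 ⊢
    omega
  have hediam : Γ.ediam = 2 := by
    refine le_antisymm (ediam_le_of_edist_le hle) ?_
    rw [← h2]; exact edist_le_ediam
  simp [SimpleGraph.diam, hediam]
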